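/- Let Q be a finite connected graded quiver with fixed vertex i and let Q̃ be its covering quiver of walk-classes at i. Then the map ρ: Q̃ → P given by ρ([u]) = (t(u), d(u)) on vertices and ρ(α^[u]) = (α, d(u)) on arrows is an injective quiver-morphism whose image is exactly the connected component P^0 of P containing (i,0); hence Q̃ ≅ P^0. -/
import Mathlib


/-- A graded quiver: a quiver with each arrow assigned an integer degree. -/
structure GradedQuiver where
  V : Type
  Arr : V → V → Type
  deg : ∀ {a b : V}, Arr a b → ℤ

namespace GradedQuiver

variable (Q : GradedQuiver)

/-- Paths: composable sequences of arrows (including trivial paths). -/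
inductive Path : Q.V → Q.V → Type
  | nil (a : Q.V) : Path a a
  | cons {a b c : Q.V} (p : Path a b) (e : Q.Arr b c) : Path a c

/-- The length of a path. -/
def Path.length {Q : GradedQuiver} : ∀ {a b : Q.V}, Q.Path a b → ℕ
  | _, _, .nil _ => 0
  | _, _, .cons p _ => p.length + 1

/-- The virtual degree of a path: the sum of `d(α) = 1 - |α|` over its arrows. -/
def Path.vdeg {Q : GradedQuiver} : ∀ {a b : Q.V}, Q.Path a b → ℤ
  | _, _, .nil _ => 0
  | _, _, .cons p e => p.vdeg + (1 - Q.deg e)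

/-- The degree of a path: the sum of the degrees of its arrows. -/
def Path.degree {Q : GradedQuiver} : ∀ {a b : Q.V}, Q.Path a b → ℤ
  | _, _, .nil _ => 0
  | _, _, .cons p e => p.degree + Q.deg e

/-- Walks: formal composites of arrows and formal inverses of arrows with
matching endpoints. -/
inductive Walk : Q.V → Q.V → Type
  | nil (a : Q.V) : Walk a a
  | consArr {a b c : Q.V} (w : Walk a b) (e : Q.Arr b c) : Walk a c
  | consInv {a b c : Q.V} (w : Walk a b) (e : Q.Arr c b) : Walk a c

/-- The virtual degree of a walk: `d(α) = 1 - |α|` for each arrow letter,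
`-(1 - |α|)` for each inverse-arrow letter. -/
def Walk.vdeg {Q : GradedQuiver} : ∀ {a b : Q.V}, Q.Walk a b → ℤ
  | _, _, .nil _ => 0
  | _, _, .consArr w e => w.vdeg + (1 - Q.deg e)
  | _, _, .consInv w e => w.vdeg - (1 - Q.deg e)

/-- `r` is the grading period of `Q`: it is `0` if every closed walk has virtual
degree `0`, and otherwise the minimal positive integer occurring as the virtual
degree of some closed walk. -/
def IsGradingPeriod (r : ℕ) : Prop :=
  (r = 0 ∧ ∀ (a : Q.V) (w : Q.Walk a a), w.vdeg = 0) ∨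
  (0 < r ∧ (∃ (a : Q.V) (w : Q.Walk a a), w.vdeg = (r : ℤ)) ∧
    ∀ (a : Q.V) (w : Q.Walk a a), 0 < w.vdeg → (r : ℤ) ≤ w.vdeg)

/-- `Q` is connected: any two vertices are joined by a walk. -/
def Connected : Prop := ∀ a b : Q.V, Nonempty (Q.Walk a b)

/-- The ℤ-covering quiver `P` of `Q`: vertices are pairs `(i, j)`, `i ∈ Q₀`,
`j ∈ ℤ`, and arrows `(α, j) : (s α, j) → (t α, j + d α)` with `d α = 1 - |α|`.
It is regarded as a graded quiver concentrated in degree `0`. -/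
def Cover : GradedQuiver where
  V := Q.V × ℤ
  Arr := fun x y => { e : Q.Arr x.1 y.1 // y.2 = x.2 + (1 - Q.deg e) }
  deg := fun _ => 0

end GradedQuiver

namespace GradedQuiver

/-- The covering quiver `Q̃` of `Q` at the vertex `i`: its vertices are the
equivalence classes of walks of `Q` with source `i`, where two walks are equivalent
iff they have the same target and the same virtual degree. A class is completely
determined by (and identified with) the pair (target, virtual degree). Its arrows
`α^[u] : [u] → [αu]` are given by the arrows `α` of `Q` with `s(α) = t(u)`. It is
regarded as a graded quiver concentrated in degree `0`. -/
def Tilde (Q : GradedQuiver) (i : Q.V) : GradedQuiver where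
  V := { x : Q.V × ℤ // ∃ u : Q.Walk i x.1, u.vdeg = x.2 }
  Arr := fun c c' => { a : Q.Arr c.val.1 c'.val.1 // c'.val.2 = c.val.2 + (1 - Q.deg a) }
  deg := fun _ => 0

end GradedQuiver

namespace GradedQuiver

/-- The connected component of the ℤ-covering quiver `P` containing the vertex
`x0`, as a full subquiver: its vertices are the vertices of `P` joined to `x0` by a
walk. -/
def Component (Q : GradedQuiver) (x0 : Q.Cover.V) : GradedQuiver where
  V := { x : Q.Cover.V // Nonempty (Q.Cover.Walk x0 x) }
  Arr := fun a b => Q.Cover.Arr a.val b.val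
  deg := fun _ => 0

end GradedQuiver

/-- An isomorphism of (the underlying ungraded) quivers: bijections on vertices and
on arrows commuting with the source and target maps. -/
structure QuivIso (Q₁ Q₂ : GradedQuiver) where
  vEquiv : Q₁.V ≃ Q₂.V
  aEquiv : ∀ x y : Q₁.V, Q₁.Arr x y ≃ Q₂.Arr (vEquiv x) (vEquiv y)

lemma cover_walk_of_walk (Q : GradedQuiver) (i : Q.V) :
    ∀ {a : Q.V} (u : Q.Walk i a), Nonempty (Q.Cover.Walk (i, 0) (a, u.vdeg))
  | _, .nil _ => by
      simp only [GradedQuiver.Walk.vdeg]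
      exact ⟨.nil _⟩
  | _, .consArr w e => by
      obtain ⟨W⟩ := cover_walk_of_walk Q i w
      exact ⟨.consArr (c := (_, (GradedQuiver.Walk.consArr w e).vdeg)) W
        ⟨e, by simp [GradedQuiver.Walk.vdeg]⟩⟩
  | _, .consInv w e => by
      obtain ⟨W⟩ := cover_walk_of_walk Q i w
      refine ⟨.consInv (c := (_, (GradedQuiver.Walk.consInv w e).vdeg)) W ⟨e, ?_⟩⟩
      simp [GradedQuiver.Walk.vdeg]

lemma walk_of_cover_walk (Q : GradedQuiver) (i : Q.V) :
    ∀ {x : Q.Cover.V} (_ : Q.Cover.Walk (i, 0) x), ∃ u : Q.Walk i x.1, u.vdeg = x.2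
  | _, .nil _ => ⟨.nil _, by simp [GradedQuiver.Walk.vdeg]⟩
  | _, .consArr W e => by
      obtain ⟨u, hu⟩ := walk_of_cover_walk Q i W
      exact ⟨.consArr u e.val, by simp [GradedQuiver.Walk.vdeg, hu, e.property]⟩
  | _, .consInv W (e : Q.Cover.Arr _ _) => by
      obtain ⟨u, hu⟩ := walk_of_cover_walk Q i W
      refine ⟨.consInv u e.val, ?_⟩
      have := e.property
      simp [GradedQuiver.Walk.vdeg, hu]
      omega

/-- STATEMENT 14: let `Q` be a finite connected graded quiver with fixed vertex `i`
and `Q̃` its covering quiver of walk-classes at `i`. The map `ρ : Q̃ → P`,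
`[u] ↦ (t(u), d(u))` on vertices and `α^[u] ↦ (α, d(u))` on arrows, is an injective
quiver-morphism whose image is exactly the connected component `P^0` of `P`
containing `(i,0)`; hence `Q̃ ≅ P^0`. -/theorem stmt_14 (Q : GradedQuiver) (hV : Finite Q.V) (hA : ∀ a b : Q.V, Finite (Q.Arr a b))
    (hconn : Q.Connected) (i : Q.V) :
    Function.Injective (fun c : (Q.Tilde i).V => c.val) ∧
    (∀ c c' : (Q.Tilde i).V,
      Function.Injective (fun a : (Q.Tilde i).Arr c c' =>
        (⟨a.val, a.property⟩ : Q.Cover.Arr c.val c'.val))) ∧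
    (∀ x : Q.Cover.V, (∃ c : (Q.Tilde i).V, c.val = x) ↔
      Nonempty (Q.Cover.Walk (i, 0) x)) ∧
    Nonempty (QuivIso (Q.Tilde i) (GradedQuiver.Component Q (i, 0))) := by
  have key : ∀ x : Q.Cover.V, (∃ u : Q.Walk i x.1, u.vdeg = x.2) ↔
      Nonempty (Q.Cover.Walk (i, 0) x) := by
    intro x
    constructor
    · rintro ⟨u, hu⟩
      have := cover_walk_of_walk Q i u
      rw [hu] at this
      exact this
    · rintro ⟨W⟩
      exact walk_of_cover_walk Q i W
  refine ⟨fun a b h => Subtype.ext h, fun c c' a b h => Subtype.ext (congrArg Subtype.val h),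
    fun x => ?_, ?_⟩
  · rw [← key x]
    exact ⟨fun ⟨c, hc⟩ => hc ▸ c.property, fun h => ⟨⟨x, h⟩, rfl⟩⟩
  · exact ⟨⟨Equiv.subtypeEquivRight key, fun c c' => Equiv.refl _⟩⟩
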